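/- Let $F$ be a forest with a bipartition $\{A, B\}$ of $V(F)$ such that every vertex $b \in B$ has degree at least 2. Then the matching number of $F$ equals $|B|$. -/

import Mathlib

open SimpleGraph

variable {V : Type*}

/-- The matching number: maximum number of edges in a matching. -/
noncomputable def matchingNumber (G : SimpleGraph V) : ℕ :=
  sSup {n | ∃ M : G.Subgraph, M.IsMatching ∧ M.edgeSet.ncard = n}

/-- In an acyclic graph, a vertex has at most one neighbor strictly closer to a target. -/
lemma closer_unique {F : SimpleGraph V} (hF : F.IsAcyclic) {b u u' r : V} (hu : F.Adj b u) (hu' : F.Adj b u')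
    (hur : F.Reachable u r) (hu'r : F.Reachable u' r)
    (hd : F.dist u r + 1 = F.dist b r) (hd' : F.dist u' r + 1 = F.dist b r) : u = u' := by
  classical
  obtain ⟨p, hp, hlen⟩ := hur.exists_path_of_dist
  obtain ⟨p', hp', hlen'⟩ := hu'r.exists_path_of_dist
  have hbp : b ∉ p.support := by
    intro hb
    have h1 := SimpleGraph.dist_le (p.dropUntil b hb)
    have h2 := SimpleGraph.Walk.length_dropUntil_le p hb
    omega
  have hbp' : b ∉ p'.support := by
    intro hb
    have h1 := SimpleGraph.dist_le (p'.dropUntil b hb)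
    have h2 := SimpleGraph.Walk.length_dropUntil_le p' hb
    omega
  have := hF.path_unique ⟨Walk.cons hu p, hp.cons hbp⟩ ⟨Walk.cons hu' p', hp'.cons hbp'⟩
  have hsup := congrArg (fun q : F.Path b r => q.1.support) this
  simp only [Walk.support_cons] at hsup
  have h1 : p.support = u :: p.support.tail := p.support_eq_cons
  have h2 : p'.support = u' :: p'.support.tail := p'.support_eq_cons
  rw [h1, h2] at hsup
  exact (List.cons_eq_cons.mp ((List.cons_eq_cons.mp hsup).2)).1

/-- In an acyclic graph, a neighbor's distance to a target differs by exactly one. -/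
lemma neighbor_dist {F : SimpleGraph V} (hF : F.IsAcyclic) {b u r : V} (hu : F.Adj b u) (hbr : F.Reachable b r) :
    F.dist u r = F.dist b r + 1 ∨ F.dist u r + 1 = F.dist b r := by
  classical
  have hur : F.Reachable u r := hu.symm.reachable.trans hbr
  obtain ⟨q, hq⟩ := hbr.exists_walk_length_eq_dist
  have hle1 : F.dist u r ≤ F.dist b r + 1 := by
    have := SimpleGraph.dist_le (Walk.cons hu.symm q)
    simpa [hq] using this
  obtain ⟨q', hq'⟩ := hur.exists_walk_length_eq_dist
  have hle2 : F.dist b r ≤ F.dist u r + 1 := by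
    have := SimpleGraph.dist_le (Walk.cons hu q')
    simpa [hq'] using this
  by_contra hcon
  push_neg at hcon
  have heq : F.dist u r = F.dist b r := by omega
  obtain ⟨p, hp, hlen⟩ := hur.exists_path_of_dist
  have hbp : b ∉ p.support := by
    intro hb
    have h1 := SimpleGraph.dist_le (p.dropUntil b hb)
    have h2 : (p.takeUntil b hb).length + (p.dropUntil b hb).length = p.length := by
      have := congrArg Walk.length (p.take_spec hb)
      rwa [Walk.length_append] at this
    have h3 : (p.takeUntil b hb).length ≠ 0 := fun h0 =>
      hu.ne (Walk.eq_of_length_eq_zero (p := p.takeUntil b hb) h0).symm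
    omega
  obtain ⟨s, hs, hslen⟩ := hbr.exists_path_of_dist
  have := hF.path_unique ⟨Walk.cons hu p, hp.cons hbp⟩ ⟨s, hs⟩
  have hlen2 := congrArg (fun q : F.Path b r => q.1.length) this
  simp only [Walk.length_cons] at hlen2
  omega

/-- If a vertex has at least 2 neighbors, one of them is farther from the target. -/
lemma exists_child {F : SimpleGraph V} (hF : F.IsAcyclic) {b r : V} (hbr : F.Reachable b r)
    (h2 : 2 ≤ (F.neighborSet b).ncard) :
    ∃ u, F.Adj b u ∧ F.dist u r = F.dist b r + 1 := by
  have hlt : 1 < (F.neighborSet b).ncard := h2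
  classical
  have hfin : (F.neighborSet b).Finite ∨ (F.neighborSet b).Infinite := (F.neighborSet b).finite_or_infinite
  rcases hfin with hfin | hinf
  · obtain ⟨u, u', hu, hu', hne⟩ := (Set.one_lt_ncard_iff hfin).mp hlt
    rcases neighbor_dist hF hu hbr with h | h
    · exact ⟨u, hu, h⟩
    rcases neighbor_dist hF hu' hbr with h' | h'
    · exact ⟨u', hu', h'⟩
    exact absurd (closer_unique hF hu hu'
      ((hu.symm).reachable.trans hbr) ((hu'.symm).reachable.trans hbr) h h') hne
  · exact absurd (hinf.ncard) (by omega)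

/-- In a forest with a bipartition `{A, B}` where every vertex of `B` has degree
at least two, the matching number equals `|B|`. -/
theorem forest_matchingNumber_eq [Fintype V] (F : SimpleGraph V) (hF : F.IsAcyclic)
    (A B : Set V)
    (hcov : ∀ v : V, v ∈ A ∨ v ∈ B) (hdisj : ∀ v : V, ¬(v ∈ A ∧ v ∈ B))
    (hedge : ∀ u v : V, F.Adj u v → (u ∈ A ∧ v ∈ B) ∨ (u ∈ B ∧ v ∈ A))
    (hdeg : ∀ b ∈ B, 2 ≤ (F.neighborSet b).ncard) :
    matchingNumber F = B.ncard := by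
  classical
  -- root of the connected component
  set root : V → V := fun v => (F.connectedComponentMk v).out with hroot
  have hreach : ∀ v : V, F.Reachable v (root v) := by
    intro v
    exact (ConnectedComponent.exact (Quot.out_eq (F.connectedComponentMk v))).symm
  -- child function
  have hex : ∀ b : V, ∃ u, b ∈ B →
      F.Adj b u ∧ F.dist u (root b) = F.dist b (root b) + 1 := by
    intro b
    by_cases hb : b ∈ B
    · obtain ⟨u, hu⟩ := exists_child hF (hreach b) (hdeg b hb)
      exact ⟨u, fun _ => hu⟩
    · exact ⟨b, fun h => absurd h hb⟩
  choose f hf using hex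
  have hfadj : ∀ b ∈ B, F.Adj b (f b) := fun b hb => (hf b hb).1
  have hfdist : ∀ b ∈ B, F.dist (f b) (root b) = F.dist b (root b) + 1 :=
    fun b hb => (hf b hb).2
  have hfA : ∀ b ∈ B, f b ∈ A := by
    intro b hb
    rcases hedge b (f b) (hfadj b hb) with ⟨h1, _⟩ | ⟨_, h2⟩
    · exact absurd ⟨h1, hb⟩ (hdisj b)
    · exact h2
  have hfnB : ∀ b ∈ B, f b ∉ B := fun b hb hB => hdisj (f b) ⟨hfA b hb, hB⟩
  -- injectivity on B
  have hinj : ∀ b ∈ B, ∀ b' ∈ B, f b = f b' → b = b' := by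
    intro b hb b' hb' hfe
    have hcomp : F.connectedComponentMk b' = F.connectedComponentMk b := by
      calc F.connectedComponentMk b' = F.connectedComponentMk (f b') :=
            ConnectedComponent.connectedComponentMk_eq_of_adj (hfadj b' hb')
        _ = F.connectedComponentMk (f b) := by rw [hfe]
        _ = F.connectedComponentMk b :=
            (ConnectedComponent.connectedComponentMk_eq_of_adj (hfadj b hb)).symm
    have hr : root b' = root b := by rw [hroot]; simp only; rw [hcomp]
    have h1 : F.dist b (root b) + 1 = F.dist (f b) (root b) := (hfdist b hb).symm
    have h2 : F.dist b' (root b) + 1 = F.dist (f b) (root b) := by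
      rw [hfe, ← hr]; exact (hfdist b' hb').symm
    exact closer_unique hF (hfadj b hb).symm (hfe ▸ (hfadj b' hb').symm)
      (hreach b) (hr ▸ hreach b') h1 h2
  -- build the matching
  let M : F.Subgraph :=
    { verts := B ∪ f '' B
      Adj := fun x y => (x ∈ B ∧ y = f x) ∨ (y ∈ B ∧ x = f y)
      adj_sub := by
        rintro x y (⟨hx, rfl⟩ | ⟨hy, rfl⟩)
        · exact hfadj x hx
        · exact (hfadj y hy).symm
      edge_vert := by
        rintro x y (⟨hx, rfl⟩ | ⟨hy, rfl⟩)
        · exact Or.inl hx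
        · exact Or.inr ⟨y, hy, rfl⟩
      symm := by
        constructor
        rintro x y (⟨hx, rfl⟩ | ⟨hy, rfl⟩)
        · exact Or.inr ⟨hx, rfl⟩
        · exact Or.inl ⟨hy, rfl⟩ }
  have hMadj : ∀ x y, M.Adj x y ↔ (x ∈ B ∧ y = f x) ∨ (y ∈ B ∧ x = f y) := fun x y => Iff.rfl
  have hM : M.IsMatching := by
    intro v hv
    rcases hv with hv | ⟨b, hb, rfl⟩
    · refine ⟨f v, Or.inl ⟨hv, rfl⟩, ?_⟩
      rintro w (⟨_, rfl⟩ | ⟨hw, rfl⟩)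
      · rfl
      · exact absurd hv (hfnB w hw)
    · refine ⟨b, Or.inr ⟨hb, rfl⟩, ?_⟩
      rintro w (⟨hfb, rfl⟩ | ⟨hw, he⟩)
      · exact absurd hfb (hfnB b hb)
      · exact hinj w hw b hb he.symm
  have hMcard : M.edgeSet.ncard = B.ncard := by
    have himg : M.edgeSet = (fun b => s(b, f b)) '' B := by
      ext e
      refine e.ind (fun x y => ?_) 
      simp only [Subgraph.mem_edgeSet, Set.mem_image]
      constructor
      · rintro (⟨hx, rfl⟩ | ⟨hy, rfl⟩)
        · exact ⟨x, hx, rfl⟩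
        · exact ⟨y, hy, Sym2.eq_swap⟩
      · rintro ⟨b, hb, he⟩
        rcases Sym2.eq_iff.mp he with ⟨rfl, rfl⟩ | ⟨h1, h2⟩
        · exact Or.inl ⟨hb, rfl⟩
        · exact Or.inr ⟨h1 ▸ hb, by rw [← h2, h1]⟩
    rw [himg]
    apply Set.ncard_image_of_injOn
    intro b hb b' hb' he
    rcases Sym2.eq_iff.mp he with ⟨h1, _⟩ | ⟨h1, h2⟩
    · exact h1
    · exact absurd (h1 ▸ hb) (hfnB b' hb')
  -- upper bound: any matching has at most |B| edges
  have hub : ∀ n ∈ {n | ∃ M : F.Subgraph, M.IsMatching ∧ M.edgeSet.ncard = n},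
      n ≤ B.ncard := by
    rintro n ⟨N, hN, rfl⟩
    set g : V → Sym2 V := fun b => if h : b ∈ N.verts then s(b, (hN h).choose) else s(b, b)
      with hg
    have hsub : N.edgeSet ⊆ g '' B := by
      intro e he
      induction e with
      | h x y =>
        rw [Subgraph.mem_edgeSet] at he
        have key : ∀ u v : V, N.Adj u v → u ∈ B → s(u, v) ∈ g '' B := by
          intro u v huv hu
          have huv' : u ∈ N.verts := huv.fst_mem
          have : (hN huv').choose = v := ((hN huv').choose_spec.2 v huv).symm ▸ rfl
          refine ⟨u, hu, ?_⟩
          rw [hg]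
          simp only [dif_pos huv']
          rw [(hN huv').choose_spec.2 v huv]
        rcases hedge x y he.adj_sub with ⟨hxA, hyB⟩ | ⟨hxB, hyA⟩
        · have := key y x he.symm hyB
          rwa [Sym2.eq_swap] at this
        · exact key x y he hxB
    calc N.edgeSet.ncard ≤ (g '' B).ncard := Set.ncard_le_ncard hsub (Set.toFinite _)
      _ ≤ B.ncard := Set.ncard_image_le (Set.toFinite _)
  have hmem : B.ncard ∈ {n | ∃ M : F.Subgraph, M.IsMatching ∧ M.edgeSet.ncard = n} :=
    ⟨M, hM, hMcard⟩
  refine le_antisymm (csSup_le ⟨B.ncard, hmem⟩ hub) (le_csSup ⟨B.ncard, hub⟩ hmem)
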